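/- Let A ∈ ℝ^{n×n} have strictly positive entries and let π ∈ ℝ^n be positive with π^T𝟏 = 1. Then there exist diagonal matrices D₁ and D₂ with positive diagonals such that D₁ A D₂ 𝟏 = 𝟏 and π^T D₁ A D₂ = π^T; that is, every positive matrix can be diagonally scaled to an element of 𝕊_n^π. -/

import Mathlib

open Matrix Finset

noncomputable def sinkG (n : ℕ) (π : Fin n → ℝ) (A : Matrix (Fin n) (Fin n) ℝ)
    (p : (Fin n → ℝ) × (Fin n → ℝ)) : ℝ :=
  (∑ i, ∑ j, π i * A i j * Real.exp (p.1 i + p.2 j))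
  - (∑ i, π i * p.1 i) - (∑ j, π j * p.2 j)
  + ((∑ i, p.1 i) - (∑ j, p.2 j))^2

lemma sinkG_cont (n : ℕ) (π : Fin n → ℝ) (A : Matrix (Fin n) (Fin n) ℝ) :
    Continuous (sinkG n π A) := by
  unfold sinkG; fun_prop

lemma sinkG_eq (n : ℕ) (π : Fin n → ℝ) (A : Matrix (Fin n) (Fin n) ℝ)
    (hs : ∑ i, π i = 1) (p : (Fin n → ℝ) × (Fin n → ℝ)) :
    sinkG n π A p =
      (∑ i, ∑ j, (π i * A i j * Real.exp (p.1 i + p.2 j) - π i * π j * (p.1 i + p.2 j)))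
      + ((∑ i, p.1 i) - (∑ j, p.2 j))^2 := by
  unfold sinkG
  have h1 : ∑ i, ∑ j, π i * π j * (p.1 i + p.2 j)
      = (∑ i, π i * p.1 i) + (∑ j, π j * p.2 j) := by
    have e1 : ∀ i, ∑ j, π i * π j * (p.1 i + p.2 j)
        = π i * p.1 i + π i * (∑ j, π j * p.2 j) := by
      intro i
      have : ∀ j, π i * π j * (p.1 i + p.2 j)
          = (π i * p.1 i) * π j + π i * (π j * p.2 j) := fun j => by ring
      simp only [this, Finset.sum_add_distrib, ← Finset.mul_sum, hs]
      ring
    simp only [e1, Finset.sum_add_distrib, ← Finset.sum_mul, hs]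
    ring
  rw [Finset.sum_congr rfl fun i _ => Finset.sum_sub_distrib _ _, Finset.sum_sub_distrib, h1]
  ring

lemma coerc_pt (m m' M b a w : ℝ) (hm : 0 < m) (hb : m ≤ b) (hm' : 0 < m')
    (ha : m' ≤ a) (haM : a ≤ M) :
    m' * |w| - (M + m')^2 / m ≤ b * Real.exp w - a * w := by
  have hMpos : 0 < M := lt_of_lt_of_le (hm'.trans_le ha) haM
  have hc2 : 0 ≤ (M + m')^2 / m := by positivity
  rcases le_or_gt w 0 with hw | hw
  · rw [abs_of_nonpos hw]
    nlinarith [Real.exp_pos w, mul_pos hm (Real.exp_pos w)]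
  · rw [abs_of_pos hw]
    have hexp : (1 + w/2)^2 ≤ Real.exp w := by
      have h1 : 1 + w/2 ≤ Real.exp (w/2) := by
        have := Real.add_one_le_exp (w/2); linarith
      have h2 : Real.exp w = Real.exp (w/2) * Real.exp (w/2) := by
        rw [← Real.exp_add]; ring_nf
      nlinarith [Real.exp_pos (w/2)]
    have hkey : m * ((1 + w/2)^2) ≤ b * Real.exp w :=
      mul_le_mul hb hexp (by positivity) (hm.le.trans hb)
    have hsq : 0 ≤ (m * w - 2*(M + m'))^2 := sq_nonneg _
    have hdiv : (M + m')^2 / m * m = (M + m')^2 := div_mul_cancel₀ _ hm.ne'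
    nlinarith [mul_pos hm hw]

set_option maxHeartbeats 2000000 in
lemma sinkG_coercive (n : ℕ) (hn : 0 < n) (π : Fin n → ℝ) (hπ : ∀ i, 0 < π i)
    (A : Matrix (Fin n) (Fin n) ℝ) (hA : ∀ i j, 0 < A i j)
    (hs : ∑ i, π i = 1) (C : ℝ) :
    ∃ R : ℝ, 0 < R ∧ ∀ p : (Fin n → ℝ) × (Fin n → ℝ), sinkG n π A p ≤ C → ‖p‖ ≤ R := by
  haveI : Nonempty (Fin n) := ⟨⟨0, hn⟩⟩
  -- min of entries of B
  obtain ⟨q, -, hq⟩ := Finset.exists_min_image (Finset.univ : Finset (Fin n × Fin n))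
    (fun q => π q.1 * A q.1 q.2) ⟨(⟨0, hn⟩, ⟨0, hn⟩), Finset.mem_univ _⟩
  set m : ℝ := π q.1 * A q.1 q.2 with hm_def
  have hm : 0 < m := mul_pos (hπ _) (hA _ _)
  have hmB : ∀ i j, m ≤ π i * A i j := fun i j => hq (i, j) (Finset.mem_univ _)
  -- min and max of π
  obtain ⟨i₁, -, hi₁⟩ := Finset.exists_min_image (Finset.univ : Finset (Fin n))
    π ⟨⟨0, hn⟩, Finset.mem_univ _⟩
  obtain ⟨i₂, -, hi₂⟩ := Finset.exists_max_image (Finset.univ : Finset (Fin n))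
    π ⟨⟨0, hn⟩, Finset.mem_univ _⟩
  set pm : ℝ := π i₁
  set pM : ℝ := π i₂
  have hpm : 0 < pm := hπ _
  have hpml : ∀ i, pm ≤ π i := fun i => hi₁ i (Finset.mem_univ _)
  have hpMl : ∀ i, π i ≤ pM := fun i => hi₂ i (Finset.mem_univ _)
  set m' : ℝ := pm^2 with hm'_def
  set M : ℝ := pM^2 with hM_def
  have hm' : 0 < m' := by positivity
  set c₂ : ℝ := (M + m')^2 / m with hc2_def
  set D : ℝ := (n:ℝ)^2 * c₂ with hD_def
  have hc₂ : 0 ≤ c₂ := by positivity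
  have hD : 0 ≤ D := by positivity
  -- main lower bound
  have key : ∀ p : (Fin n → ℝ) × (Fin n → ℝ),
      m' * (∑ i, ∑ j, |p.1 i + p.2 j|) - D + ((∑ i, p.1 i) - (∑ j, p.2 j))^2
        ≤ sinkG n π A p := by
    intro p
    rw [sinkG_eq n π A hs p]
    have hterm : ∀ i j, m' * |p.1 i + p.2 j| - c₂
        ≤ π i * A i j * Real.exp (p.1 i + p.2 j) - π i * π j * (p.1 i + p.2 j) := by
      intro i j
      refine coerc_pt m m' M _ _ _ hm (hmB i j) hm' ?_ ?_
      · exact mul_le_mul (hpml i) (hpml j) hpm.le (hπ i).le |>.trans_eq rfl |>.trans_eq rfl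
          |> fun h => by nlinarith [hpml i, hpml j, hpm, hπ i, hπ j]
      · nlinarith [hpMl i, hpMl j, hπ i, hπ j, hpm.trans_le (hpMl i₁)]
    have hsum : ∑ i, ∑ j, (m' * |p.1 i + p.2 j| - c₂)
        ≤ ∑ i, ∑ j, (π i * A i j * Real.exp (p.1 i + p.2 j) - π i * π j * (p.1 i + p.2 j)) :=
      Finset.sum_le_sum fun i _ => Finset.sum_le_sum fun j _ => hterm i j
    have hcalc : ∑ i, ∑ j, (m' * |p.1 i + p.2 j| - c₂)
        = m' * (∑ i, ∑ j, |p.1 i + p.2 j|) - D := by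
      simp only [Finset.sum_sub_distrib, Finset.sum_const, Finset.card_univ,
        Fintype.card_fin, nsmul_eq_mul, ← Finset.mul_sum]
      push_cast [hD_def]
      ring
    linarith [hsum, hcalc.symm.trans_le hsum]
  set E : ℝ := (C + D)/m' with hE_def
  refine ⟨max 1 (3 * E + (1 + C + D) + 4 * n * E), lt_of_lt_of_le one_pos (le_max_left _ _), ?_⟩
  intro p hp
  set W : ℝ := ∑ i, ∑ j, |p.1 i + p.2 j| with hW_def
  set s : ℝ := (∑ i, p.1 i) - (∑ j, p.2 j) with hs_def
  have hW0 : 0 ≤ W := Finset.sum_nonneg fun i _ => Finset.sum_nonneg fun j _ => abs_nonneg _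
  have hkey := key p
  rw [← hW_def, ← hs_def] at hkey
  have hWb : m' * W ≤ C + D := by nlinarith [sq_nonneg s]
  have hsb : s^2 ≤ C + D := by nlinarith
  have hCD : 0 ≤ C + D := le_trans (by positivity) hWb
  have hE0 : 0 ≤ E := by positivity
  have hWle : W ≤ E := by
    rw [hE_def, le_div_iff₀ hm']
    linarith [mul_comm m' W, hWb]
  have hsabs : |s| ≤ 1 + C + D := by
    have : |s| ≤ 1 + s^2 := by nlinarith [abs_nonneg s, sq_abs s]
    linarith
  have hwle : ∀ i j, |p.1 i + p.2 j| ≤ W := by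
    intro i j
    calc |p.1 i + p.2 j| ≤ ∑ j', |p.1 i + p.2 j'| :=
          Finset.single_le_sum (f := fun j' => |p.1 i + p.2 j'|)
            (fun j' _ => abs_nonneg _) (Finset.mem_univ j)
      _ ≤ W := Finset.single_le_sum (f := fun i' => ∑ j', |p.1 i' + p.2 j'|)
          (fun i' _ => Finset.sum_nonneg fun j' _ => abs_nonneg _) (Finset.mem_univ i)
  set i0 : Fin n := ⟨0, hn⟩
  have hud : ∀ i, |p.1 i - p.1 i0| ≤ 2 * W := by
    intro i
    have h1 := hwle i i0
    have h2 := hwle i0 i0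
    calc |p.1 i - p.1 i0| = |(p.1 i + p.2 i0) - (p.1 i0 + p.2 i0)| := by ring_nf
      _ ≤ |p.1 i + p.2 i0| + |p.1 i0 + p.2 i0| := abs_sub _ _
      _ ≤ 2 * W := by linarith
  have hvd : ∀ j, |p.2 j - p.2 i0| ≤ 2 * W := by
    intro j
    have h1 := hwle i0 j
    have h2 := hwle i0 i0
    calc |p.2 j - p.2 i0| = |(p.1 i0 + p.2 j) - (p.1 i0 + p.2 i0)| := by ring_nf
      _ ≤ |p.1 i0 + p.2 j| + |p.1 i0 + p.2 i0| := abs_sub _ _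
      _ ≤ 2 * W := by linarith
  have hsum_u : (∑ i, p.1 i) = (∑ i, (p.1 i - p.1 i0)) + n * p.1 i0 := by
    rw [Finset.sum_sub_distrib, Finset.sum_const, Finset.card_univ, Fintype.card_fin,
      nsmul_eq_mul]
    ring
  have hsum_v : (∑ j, p.2 j) = (∑ j, (p.2 j - p.2 i0)) + n * p.2 i0 := by
    rw [Finset.sum_sub_distrib, Finset.sum_const, Finset.card_univ, Fintype.card_fin,
      nsmul_eq_mul]
    ring
  have hbu : |∑ i, (p.1 i - p.1 i0)| ≤ 2 * n * W := by
    calc |∑ i, (p.1 i - p.1 i0)| ≤ ∑ i, |p.1 i - p.1 i0| := Finset.abs_sum_le_sum_abs _ _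
      _ ≤ ∑ _i : Fin n, 2 * W := Finset.sum_le_sum fun i _ => hud i
      _ = 2 * n * W := by
          rw [Finset.sum_const, Finset.card_univ, Fintype.card_fin, nsmul_eq_mul]; ring
  have hbv : |∑ j, (p.2 j - p.2 i0)| ≤ 2 * n * W := by
    calc |∑ j, (p.2 j - p.2 i0)| ≤ ∑ j, |p.2 j - p.2 i0| := Finset.abs_sum_le_sum_abs _ _
      _ ≤ ∑ _j : Fin n, 2 * W := Finset.sum_le_sum fun j _ => hvd j
      _ = 2 * n * W := by
          rw [Finset.sum_const, Finset.card_univ, Fintype.card_fin, nsmul_eq_mul]; ring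
  have hdiff : (n:ℝ) * (p.1 i0 - p.2 i0)
      = s - (∑ i, (p.1 i - p.1 i0)) + (∑ j, (p.2 j - p.2 i0)) := by
    rw [hs_def, hsum_u, hsum_v]; ring
  have hn1 : (1:ℝ) ≤ n := by exact_mod_cast hn
  have habs_diff : |p.1 i0 - p.2 i0| ≤ |s| + 4 * n * W := by
    have h1 : (n:ℝ) * |p.1 i0 - p.2 i0| = |(n:ℝ) * (p.1 i0 - p.2 i0)| := by
      rw [abs_mul, abs_of_nonneg (by positivity : (0:ℝ) ≤ (n:ℝ))]
    have h2 : |(n:ℝ) * (p.1 i0 - p.2 i0)| ≤ |s| + 4 * n * W := by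
      rw [hdiff]
      calc |s - (∑ i, (p.1 i - p.1 i0)) + (∑ j, (p.2 j - p.2 i0))|
          ≤ |s - (∑ i, (p.1 i - p.1 i0))| + |∑ j, (p.2 j - p.2 i0)| := abs_add_le _ _
        _ ≤ (|s| + |∑ i, (p.1 i - p.1 i0)|) + |∑ j, (p.2 j - p.2 i0)| := by
            gcongr; exact abs_sub _ _
        _ ≤ |s| + 4 * n * W := by linarith
    nlinarith [abs_nonneg (p.1 i0 - p.2 i0)]
  have habs_sum0 : |p.1 i0 + p.2 i0| ≤ W := hwle i0 i0
  have hu0 : |p.1 i0| ≤ W + |s| + 4 * n * W := by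
    have h2 : |2 * p.1 i0| ≤ W + (|s| + 4*n*W) := by
      calc |2 * p.1 i0| = |(p.1 i0 + p.2 i0) + (p.1 i0 - p.2 i0)| := by ring_nf
        _ ≤ |p.1 i0 + p.2 i0| + |p.1 i0 - p.2 i0| := abs_add_le _ _
        _ ≤ W + (|s| + 4*n*W) := by linarith
    rw [abs_mul, abs_two] at h2
    linarith [abs_nonneg (p.1 i0)]
  have hv0 : |p.2 i0| ≤ W + |s| + 4 * n * W := by
    have h2 : |2 * p.2 i0| ≤ W + (|s| + 4*n*W) := by
      calc |2 * p.2 i0| = |(p.1 i0 + p.2 i0) - (p.1 i0 - p.2 i0)| := by ring_nf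
        _ ≤ |p.1 i0 + p.2 i0| + |p.1 i0 - p.2 i0| := abs_sub _ _
        _ ≤ W + (|s| + 4*n*W) := by linarith
    rw [abs_mul, abs_two] at h2
    linarith [abs_nonneg (p.2 i0)]
  have hWE : 4 * (n:ℝ) * W ≤ 4 * n * E := by nlinarith
  have hbound : ∀ i, |p.1 i| ≤ 3*E + (1 + C + D) + 4*n*E
      ∧ |p.2 i| ≤ 3*E + (1 + C + D) + 4*n*E := by
    intro i
    have h1 : |p.1 i| ≤ 3*W + |s| + 4*n*W := by
      calc |p.1 i| = |(p.1 i - p.1 i0) + p.1 i0| := by ring_nf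
        _ ≤ |p.1 i - p.1 i0| + |p.1 i0| := abs_add_le _ _
        _ ≤ 3*W + |s| + 4*n*W := by linarith [hud i]
    have h2 : |p.2 i| ≤ 3*W + |s| + 4*n*W := by
      calc |p.2 i| = |(p.2 i - p.2 i0) + p.2 i0| := by ring_nf
        _ ≤ |p.2 i - p.2 i0| + |p.2 i0| := abs_add_le _ _
        _ ≤ 3*W + |s| + 4*n*W := by linarith [hvd i]
    constructor
    · refine h1.trans ?_; linarith
    · refine h2.trans ?_; linarith
  rw [Prod.norm_def]
  apply max_le
  · apply pi_norm_le_iff_of_nonneg (le_trans one_pos.le (le_max_left _ _)) |>.mpr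
    intro i
    rw [Real.norm_eq_abs]
    exact le_trans (hbound i).1 (le_max_right _ _)
  · apply pi_norm_le_iff_of_nonneg (le_trans one_pos.le (le_max_left _ _)) |>.mpr
    intro i
    rw [Real.norm_eq_abs]
    exact le_trans (hbound i).2 (le_max_right _ _)

lemma sinkG_exists_min (n : ℕ) (hn : 0 < n) (π : Fin n → ℝ) (hπ : ∀ i, 0 < π i)
    (A : Matrix (Fin n) (Fin n) ℝ) (hA : ∀ i j, 0 < A i j) (hs : ∑ i, π i = 1) :
    ∃ x : (Fin n → ℝ) × (Fin n → ℝ), ∀ y, sinkG n π A x ≤ sinkG n π A y := by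
  obtain ⟨R, hR, hcoer⟩ := sinkG_coercive n hn π hπ A hA hs (sinkG n π A 0)
  have hcomp : IsCompact (Metric.closedBall (0 : (Fin n → ℝ) × (Fin n → ℝ)) R) :=
    isCompact_closedBall 0 R
  obtain ⟨x, hxmem, hxmin⟩ := hcomp.exists_isMinOn
    ⟨0, Metric.mem_closedBall_self hR.le⟩ (sinkG_cont n π A).continuousOn
  refine ⟨x, fun y => ?_⟩
  by_cases hy : ‖y‖ ≤ R
  · exact hxmin (by simpa [Metric.mem_closedBall, dist_zero_right] using hy)
  · have h0 : sinkG n π A x ≤ sinkG n π A 0 :=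
      hxmin (Metric.mem_closedBall_self hR.le)
    have : ¬ sinkG n π A y ≤ sinkG n π A 0 := fun h => hy (hcoer y h)
    linarith [not_le.mp this]

lemma sinkG_stationary (n : ℕ) (π : Fin n → ℝ) (A : Matrix (Fin n) (Fin n) ℝ)
    (x : (Fin n → ℝ) × (Fin n → ℝ)) (hx : ∀ y, sinkG n π A x ≤ sinkG n π A y) :
    (∀ i, (∑ j, π i * A i j * Real.exp (x.1 i + x.2 j)) - π i
        + 2 * ((∑ i', x.1 i') - (∑ j, x.2 j)) = 0) ∧
    (∀ j, (∑ i, π i * A i j * Real.exp (x.1 i + x.2 j)) - π j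
        - 2 * ((∑ i', x.1 i') - (∑ j', x.2 j')) = 0) := by
  set s : ℝ := (∑ i', x.1 i') - (∑ j, x.2 j) with hs_def
  constructor
  · intro i
    set h : ℝ → ℝ := fun t => sinkG n π A (Function.update x.1 i t, x.2) with hh_def
    have hloc : IsLocalMin h (x.1 i) := by
      apply Filter.Eventually.of_forall
      intro t
      have h1 : h (x.1 i) = sinkG n π A x := by
        rw [hh_def]; simp [Function.update_eq_self]
      rw [h1]
      exact hx _
    have hderiv : HasDerivAt h
        ((∑ j, π i * A i j * Real.exp (x.1 i + x.2 j)) - π i + 2 * s) (x.1 i) := by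
      rw [hh_def]
      unfold sinkG
      have hd1 : HasDerivAt (fun t => ∑ i', ∑ j, π i' * A i' j
          * Real.exp (Function.update x.1 i t i' + x.2 j))
          (∑ j, π i * A i j * Real.exp (x.1 i + x.2 j)) (x.1 i) := by
        have := HasDerivAt.fun_sum (u := Finset.univ)
          (A := fun i' t => ∑ j, π i' * A i' j * Real.exp (Function.update x.1 i t i' + x.2 j))
          (A' := fun i' => if i' = i then ∑ j, π i * A i j * Real.exp (x.1 i + x.2 j) else 0)
          (x := x.1 i) ?_
        · simpa [Finset.sum_ite_eq' Finset.univ i] using this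
        · intro i' _
          by_cases hii : i' = i
          · subst hii
            simp only [Function.update_self, if_pos rfl]
            apply HasDerivAt.fun_sum
            intro j _
            have : HasDerivAt (fun t => Real.exp (t + x.2 j))
                (Real.exp (x.1 i' + x.2 j)) (x.1 i') := by
              simpa using ((hasDerivAt_id (x.1 i')).add_const (x.2 j)).exp
            simpa [mul_comm] using this.const_mul (π i' * A i' j)
          · simp only [Function.update_of_ne hii, if_neg hii]
            exact hasDerivAt_const _ _
      have hd2 : HasDerivAt (fun t => ∑ i', π i' * Function.update x.1 i t i') (π i) (x.1 i) := by
        have := HasDerivAt.fun_sum (u := Finset.univ)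
          (A := fun i' t => π i' * Function.update x.1 i t i')
          (A' := fun i' => if i' = i then π i else 0) (x := x.1 i) ?_
        · simpa [Finset.sum_ite_eq' Finset.univ i] using this
        · intro i' _
          by_cases hii : i' = i
          · subst hii
            simp only [Function.update_self, if_pos rfl]
            simpa using (hasDerivAt_id (x.1 i')).const_mul (π i')
          · simp only [Function.update_of_ne hii, if_neg hii]
            exact hasDerivAt_const _ _
      have hd3 : HasDerivAt (fun t => ((∑ i', Function.update x.1 i t i') - ∑ j, x.2 j)^2)
          (2 * s) (x.1 i) := by
        have hinner : HasDerivAt (fun t => (∑ i', Function.update x.1 i t i') - ∑ j, x.2 j)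
            1 (x.1 i) := by
          have hsum : HasDerivAt (fun t => ∑ i', Function.update x.1 i t i') 1 (x.1 i) := by
            have := HasDerivAt.fun_sum (u := Finset.univ)
              (A := fun i' t => Function.update x.1 i t i')
              (A' := fun i' => if i' = i then 1 else 0) (x := x.1 i) ?_
            · simpa [Finset.sum_ite_eq' Finset.univ i] using this
            · intro i' _
              by_cases hii : i' = i
              · subst hii
                simp only [Function.update_self, if_pos rfl]
                exact hasDerivAt_id _
              · simp only [Function.update_of_ne hii, if_neg hii]
                exact hasDerivAt_const _ _
          exact hsum.sub_const _
        have := hinner.fun_pow 2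
        have heval : (∑ i', Function.update x.1 i (x.1 i) i') - ∑ j, x.2 j = s := by
          rw [Function.update_eq_self, hs_def]
        rw [heval] at this
        simpa [mul_comm] using this
      have := ((hd1.sub hd2).sub_const (∑ j, π j * x.2 j)).add hd3
      exact this.congr_deriv (by ring)
    have := hloc.hasDerivAt_eq_zero hderiv
    linarith [this]
  · intro j
    set h : ℝ → ℝ := fun t => sinkG n π A (x.1, Function.update x.2 j t) with hh_def
    have hloc : IsLocalMin h (x.2 j) := by
      apply Filter.Eventually.of_forall
      intro t
      have h1 : h (x.2 j) = sinkG n π A x := by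
        rw [hh_def]; simp [Function.update_eq_self]
      rw [h1]
      exact hx _
    have hderiv : HasDerivAt h
        ((∑ i, π i * A i j * Real.exp (x.1 i + x.2 j)) - π j - 2 * s) (x.2 j) := by
      rw [hh_def]
      unfold sinkG
      have hd1 : HasDerivAt (fun t => ∑ i, ∑ j', π i * A i j'
          * Real.exp (x.1 i + Function.update x.2 j t j'))
          (∑ i, π i * A i j * Real.exp (x.1 i + x.2 j)) (x.2 j) := by
        apply HasDerivAt.fun_sum
        intro i _
        have := HasDerivAt.fun_sum (u := Finset.univ)
          (A := fun j' t => π i * A i j' * Real.exp (x.1 i + Function.update x.2 j t j'))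
          (A' := fun j' => if j' = j then π i * A i j * Real.exp (x.1 i + x.2 j) else 0)
          (x := x.2 j) ?_
        · simpa [Finset.sum_ite_eq' Finset.univ j] using this
        · intro j' _
          by_cases hjj : j' = j
          · subst hjj
            simp only [Function.update_self, if_pos rfl]
            have : HasDerivAt (fun t => Real.exp (x.1 i + t))
                (Real.exp (x.1 i + x.2 j')) (x.2 j') := by
              simpa using ((hasDerivAt_id (x.2 j')).const_add (x.1 i)).exp
            simpa [mul_comm] using this.const_mul (π i * A i j')
          · simp only [Function.update_of_ne hjj, if_neg hjj]
            exact hasDerivAt_const _ _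
      have hd2 : HasDerivAt (fun t => ∑ j', π j' * Function.update x.2 j t j') (π j) (x.2 j) := by
        have := HasDerivAt.fun_sum (u := Finset.univ)
          (A := fun j' t => π j' * Function.update x.2 j t j')
          (A' := fun j' => if j' = j then π j else 0) (x := x.2 j) ?_
        · simpa [Finset.sum_ite_eq' Finset.univ j] using this
        · intro j' _
          by_cases hjj : j' = j
          · subst hjj
            simp only [Function.update_self, if_pos rfl]
            simpa using (hasDerivAt_id (x.2 j')).const_mul (π j')
          · simp only [Function.update_of_ne hjj, if_neg hjj]
            exact hasDerivAt_const _ _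
      have hd3 : HasDerivAt (fun t => ((∑ i', x.1 i') - ∑ j', Function.update x.2 j t j')^2)
          (-(2 * s)) (x.2 j) := by
        have hinner : HasDerivAt (fun t => (∑ i', x.1 i') - ∑ j', Function.update x.2 j t j')
            (-1) (x.2 j) := by
          have hsum : HasDerivAt (fun t => ∑ j', Function.update x.2 j t j') 1 (x.2 j) := by
            have := HasDerivAt.fun_sum (u := Finset.univ)
              (A := fun j' t => Function.update x.2 j t j')
              (A' := fun j' => if j' = j then 1 else 0) (x := x.2 j) ?_
            · simpa [Finset.sum_ite_eq' Finset.univ j] using this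
            · intro j' _
              by_cases hjj : j' = j
              · subst hjj
                simp only [Function.update_self, if_pos rfl]
                exact hasDerivAt_id _
              · simp only [Function.update_of_ne hjj, if_neg hjj]
                exact hasDerivAt_const _ _
          simpa using hsum.const_sub (∑ i', x.1 i')
        have := hinner.fun_pow 2
        have heval : (∑ i', x.1 i') - ∑ j', Function.update x.2 j (x.2 j) j' = s := by
          rw [Function.update_eq_self, hs_def]
        rw [heval] at this
        exact this.congr_deriv (by push_cast; ring)
      have := ((hd1.sub_const (∑ i', π i' * x.1 i')).sub hd2).add hd3
      exact this.congr_deriv (by ring)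
    have := hloc.hasDerivAt_eq_zero hderiv
    linarith [this]

/-- Every positive matrix can be diagonally scaled (with positive diagonal scalings)
to a positive stochastic matrix with stationary distribution `π`. -/
theorem sinkhorn_scaling_to_fixed_stationary (n : ℕ) (π : Fin n → ℝ)
    (hπ : ∀ i, 0 < π i) (hπ1 : π ⬝ᵥ (1 : Fin n → ℝ) = 1)
    (A : Matrix (Fin n) (Fin n) ℝ) (hA : ∀ i j, 0 < A i j) :
    ∃ d₁ d₂ : Fin n → ℝ, (∀ i, 0 < d₁ i) ∧ (∀ i, 0 < d₂ i) ∧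
      (Matrix.diagonal d₁ * A * Matrix.diagonal d₂) *ᵥ (1 : Fin n → ℝ) = 1 ∧
      π ᵥ* (Matrix.diagonal d₁ * A * Matrix.diagonal d₂) = π := by
  have hs : ∑ i, π i = 1 := by
    rw [← hπ1]; simp [dotProduct]
  rcases Nat.eq_zero_or_pos n with h0 | hn
  · subst h0
    exfalso
    simp at hs
  obtain ⟨x, hx⟩ := sinkG_exists_min n hn π hπ A hA hs
  obtain ⟨hrow, hcol⟩ := sinkG_stationary n π A x hx
  set s : ℝ := (∑ i', x.1 i') - (∑ j', x.2 j') with hs_def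
  -- s = 0
  have hsum_row : ∑ i, ((∑ j, π i * A i j * Real.exp (x.1 i + x.2 j)) - π i + 2 * s) = 0 := by
    simp only [hrow]
    simp
  have hsum_col : ∑ j, ((∑ i, π i * A i j * Real.exp (x.1 i + x.2 j)) - π j - 2 * s) = 0 := by
    simp only [hcol]
    simp
  have hs0 : s = 0 := by
    have e1 : (∑ i, ∑ j, π i * A i j * Real.exp (x.1 i + x.2 j)) - (∑ i, π i)
        + n * (2 * s) = 0 := by
      rw [← hsum_row]
      rw [Finset.sum_add_distrib, Finset.sum_sub_distrib, Finset.sum_const,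
        Finset.card_univ, Fintype.card_fin, nsmul_eq_mul]
    have e2 : (∑ j, ∑ i, π i * A i j * Real.exp (x.1 i + x.2 j)) - (∑ j, π j)
        - n * (2 * s) = 0 := by
      rw [← hsum_col]
      rw [Finset.sum_sub_distrib, Finset.sum_sub_distrib, Finset.sum_const,
        Finset.card_univ, Fintype.card_fin, nsmul_eq_mul]
    rw [Finset.sum_comm] at e2
    have hn1 : (1:ℝ) ≤ n := by exact_mod_cast hn
    nlinarith [e1, e2]
  rw [hs0] at hrow hcol
  have hrow' : ∀ i, ∑ j, π i * A i j * Real.exp (x.1 i + x.2 j) = π i := by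
    intro i; have := hrow i; linarith
  have hcol' : ∀ j, ∑ i, π i * A i j * Real.exp (x.1 i + x.2 j) = π j := by
    intro j; have := hcol j; linarith
  refine ⟨fun i => Real.exp (x.1 i), fun j => Real.exp (x.2 j),
    fun i => Real.exp_pos _, fun j => Real.exp_pos _, ?_, ?_⟩
  · funext i
    have hπi := (hπ i).ne'
    have hentry : ∀ i' j, ((Matrix.diagonal fun i'' => Real.exp (x.1 i'')) * A
        * Matrix.diagonal fun j' => Real.exp (x.2 j')) i' j
        = Real.exp (x.1 i') * A i' j * Real.exp (x.2 j) := by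
      intro i' j
      rw [Matrix.mul_diagonal, Matrix.diagonal_mul]
    simp only [mulVec, dotProduct, hentry, Pi.one_apply, mul_one]
    have e1 : ∀ j : Fin n, π i * (Real.exp (x.1 i) * A i j * Real.exp (x.2 j))
        = π i * A i j * Real.exp (x.1 i + x.2 j) := by
      intro j; rw [Real.exp_add]; ring
    have e : π i * (∑ j, Real.exp (x.1 i) * A i j * Real.exp (x.2 j)) = π i * 1 := by
      rw [Finset.mul_sum, mul_one]
      simp only [e1]
      exact hrow' i
    exact mul_left_cancel₀ hπi e
  · funext j
    have hentry : ∀ i j', ((Matrix.diagonal fun i'' => Real.exp (x.1 i'')) * A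
        * Matrix.diagonal fun j'' => Real.exp (x.2 j'')) i j'
        = Real.exp (x.1 i) * A i j' * Real.exp (x.2 j') := by
      intro i j'
      rw [Matrix.mul_diagonal, Matrix.diagonal_mul]
    simp only [vecMul, dotProduct, hentry]
    have e1 : ∀ i : Fin n, π i * (Real.exp (x.1 i) * A i j * Real.exp (x.2 j))
        = π i * A i j * Real.exp (x.1 i + x.2 j) := by
      intro i; rw [Real.exp_add]; ring
    simp only [e1]
    exact hcol' j
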